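/- Let d ≥ 2, n ≥ 1, 1/2 ≤ α < 1, and let C be an α-separator of G_d(n) separating the vertex set into parts A and B (every component of V∖C lies entirely in A or in B, |A|, |B| ≤ α n^d, and no edge joins A to B). Fix a coordinate direction and consider the n^{d−1} grid lines in that direction. If fewer than (1−α)n^{d−1}/d of these lines intersect C, then at least ((1−α)d − (1−α))·n^{d−1}/d of the lines consist only of vertices of A, and at least that many lines consist only of vertices of B. -/

import Mathlib

/-- The grid graph on the box `∏ i, {0, …, r i − 1}`: two vertices are adjacent
iff they differ in exactly one coordinate and there by exactly 1. -/
def boxGraph {d : ℕ} (r : Fin d → ℕ) : SimpleGraph ((i : Fin d) → Fin (r i)) where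
  Adj v w := ∃ k, (∀ j, j ≠ k → v j = w j) ∧
    ((v k : ℕ) + 1 = (w k : ℕ) ∨ (w k : ℕ) + 1 = (v k : ℕ))
  symm := ⟨by
    rintro v w ⟨k, h1, h2⟩
    exact ⟨k, fun j hj => (h1 j hj).symm, h2.symm⟩⟩
  loopless := ⟨by
    rintro v ⟨k, _, h2⟩
    omega⟩

/-- The `d`-dimensional grid graph `G_d(n)` on `{0, …, n−1}^d`. -/
def gridGraph (d n : ℕ) : SimpleGraph ((_ : Fin d) → Fin n) :=
  boxGraph (fun _ => n)

/-- The graph `G` with the vertices of `C` avoided: edges of `G` with both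
endpoints outside `C`. Its reachability classes on `Cᶜ` are the connected
components of `G` with `C` removed. -/
def avoidGraph {V : Type*} (G : SimpleGraph V) (C : Set V) : SimpleGraph V where
  Adj a b := G.Adj a b ∧ a ∉ C ∧ b ∉ C
  symm := ⟨fun _ _ ⟨h, ha, hb⟩ => ⟨h.symm, hb, ha⟩⟩
  loopless := ⟨fun a ⟨h, _, _⟩ => G.ne_of_adj h rfl⟩

-- helper: lines avoiding C stay in one side
lemma line_side {d n : ℕ} (hn : 1 ≤ n) (k : Fin d)
    (A B C : Finset ((_ : Fin d) → Fin n))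
    (hcover : ∀ v, v ∈ A ∨ v ∈ B ∨ v ∈ C)
    (hnoedge : ∀ a ∈ A, ∀ b ∈ B, ¬ (gridGraph d n).Adj a b)
    (w : (_ : Fin d) → Fin n) (hw0 : (w k : ℕ) = 0)
    (hC : ¬ ∃ v ∈ C, ∀ j, j ≠ k → v j = w j)
    (hw : w ∈ A) :
    ∀ v, (∀ j, j ≠ k → v j = w j) → v ∈ A := by
  have key : ∀ m (hm : m < n), Function.update w k ⟨m, hm⟩ ∈ A := by
    intro m
    induction m with
    | zero =>
      intro hm
      have : Function.update w k ⟨0, hm⟩ = w := by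
        funext j
        by_cases hj : j = k
        · subst hj; rw [Function.update_self]; exact (Fin.ext hw0.symm)
        · rw [Function.update_of_ne hj]
      rwa [this]
    | succ m ih =>
      intro hm
      have hm' : m < n := by omega
      have hprev := ih hm'
      set v1 := Function.update w k ⟨m, hm'⟩ with hv1
      set v2 := Function.update w k ⟨m + 1, hm⟩ with hv2
      have hoff : ∀ j, j ≠ k → v2 j = w j := fun j hj => Function.update_of_ne hj _ _
      have hadj : (gridGraph d n).Adj v1 v2 := by
        refine ⟨k, fun j hj => ?_, ?_⟩
        · rw [hv1, hv2, Function.update_of_ne hj, Function.update_of_ne hj]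
        · left
          rw [hv1, hv2, Function.update_self, Function.update_self]
      rcases hcover v2 with h | h | h
      · exact h
      · exact absurd hadj (hnoedge _ hprev _ h)
      · exact absurd (⟨v2, h, hoff⟩ : ∃ v ∈ C, ∀ j, j ≠ k → v j = w j) hC
  intro v hv
  have : v = Function.update w k ⟨(v k : ℕ), (v k).isLt⟩ := by
    funext j
    by_cases hj : j = k
    · subst hj; rw [Function.update_self]
    · rw [Function.update_of_ne hj]; exact hv j hj
  rw [this]
  exact key _ _

-- counting lemma
lemma fiber_count {d n : ℕ} (hn : 1 ≤ n) (k : Fin d)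
    (T : Finset ((_ : Fin d) → Fin n))
    (hT : ∀ w ∈ T, (w k : ℕ) = 0) :
    (Finset.univ.filter
      (fun v : (_ : Fin d) → Fin n => Function.update v k (⟨0, hn⟩ : Fin n) ∈ T)).card
      = n * T.card := by
  rw [show n * T.card = (T ×ˢ (Finset.univ : Finset (Fin n))).card by
    rw [Finset.card_product]; simp [mul_comm]]
  apply Finset.card_bij'
    (i := fun v _ => (Function.update v k (⟨0, hn⟩ : Fin n), v k))
    (j := fun (p : ((_ : Fin d) → Fin n) × Fin n) _ => Function.update p.1 k p.2)
  · intro v hv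
    simp only [Finset.mem_filter] at hv
    simp [Finset.mem_product, hv.2]
  · rintro ⟨w, t⟩ hp
    simp only [Finset.mem_product] at hp
    simp only [Finset.mem_filter, Finset.mem_univ, true_and]
    have : Function.update (Function.update w k t) k (⟨0, hn⟩ : Fin n) = w := by
      funext j
      by_cases hj : j = k
      · subst hj
        rw [Function.update_self]
        exact Fin.ext (by simp [hT w hp.1])
      · rw [Function.update_of_ne hj, Function.update_of_ne hj]
    rw [this]; exact hp.1
  · intro v hv
    simp only [Finset.mem_filter] at hv
    funext j
    by_cases hj : j = k
    · subst hj; simp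
    · simp [Function.update_of_ne hj]
  · rintro ⟨w, t⟩ hp
    simp only [Finset.mem_product] at hp
    have h1 : Function.update w k t k = t := Function.update_self _ _ _
    have h2 : Function.update (Function.update w k t) k (⟨0, hn⟩ : Fin n) = w := by
      funext j
      by_cases hj : j = k
      · subst hj
        rw [Function.update_self]
        exact Fin.ext (by simp [hT w hp.1])
      · rw [Function.update_of_ne hj, Function.update_of_ne hj]
    simp [h1, h2]

lemma arith_step (dR N α la lb lc : ℝ) (hd : 0 < dR)
    (hsum : N ≤ la + lb + lc) (hb : lb ≤ α * N) (hc : lc * dR < (1 - α) * N) :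
    ((1 - α) * dR - (1 - α)) * N / dR ≤ la := by
  rw [div_le_iff₀ hd]
  nlinarith [mul_le_mul_of_nonneg_left hsum hd.le, mul_le_mul_of_nonneg_left hb hd.le]

/-- Key step in the proof of the grid separator theorem: if `C` is an
`α`-separator of `G_d(n)` separating the rest of the vertices into sides `A` and
`B`, and fewer than `(1−α)n^{d−1}/d` of the `n^{d−1}` grid lines in a fixed
direction `k` intersect `C`, then at least `((1−α)d − (1−α))·n^{d−1}/d` of the
lines consist only of vertices of `A`, and at least that many consist only of
vertices of `B`. (Lines are indexed by their base point with `k`-th coordinate `0`.) -/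
theorem grid_lines_in_sides
    (d n : ℕ) (hd : 2 ≤ d) (hn : 1 ≤ n)
    (α : ℝ) (hα1 : 1 / 2 ≤ α) (hα2 : α < 1)
    (k : Fin d)
    (A B C : Finset ((_ : Fin d) → Fin n))
    (hAB : Disjoint A B) (hAC : Disjoint A C) (hBC : Disjoint B C)
    (hcover : A ∪ B ∪ C = Finset.univ)
    (hA : (A.card : ℝ) ≤ α * (n : ℝ) ^ d)
    (hB : (B.card : ℝ) ≤ α * (n : ℝ) ^ d)
    (hnoedge : ∀ a ∈ A, ∀ b ∈ B, ¬ (gridGraph d n).Adj a b)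
    (hfewlines :
      (((Finset.univ.filter (fun w : (_ : Fin d) → Fin n => (w k : ℕ) = 0)).filter
          (fun w => ∃ v ∈ C, ∀ j, j ≠ k → v j = w j)).card : ℝ)
        < (1 - α) * (n : ℝ) ^ (d - 1) / d) :
    ((1 - α) * d - (1 - α)) * (n : ℝ) ^ (d - 1) / d
        ≤ (((Finset.univ.filter (fun w : (_ : Fin d) → Fin n => (w k : ℕ) = 0)).filter
            (fun w => ∀ v : (_ : Fin d) → Fin n, (∀ j, j ≠ k → v j = w j) → v ∈ A)).card : ℝ) ∧
    ((1 - α) * d - (1 - α)) * (n : ℝ) ^ (d - 1) / d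
        ≤ (((Finset.univ.filter (fun w : (_ : Fin d) → Fin n => (w k : ℕ) = 0)).filter
            (fun w => ∀ v : (_ : Fin d) → Fin n, (∀ j, j ≠ k → v j = w j) → v ∈ B)).card : ℝ) := by
  classical
  set L : Finset ((_ : Fin d) → Fin n) :=
    Finset.univ.filter (fun w => (w k : ℕ) = 0) with hL
  set LC := L.filter (fun w => ∃ v ∈ C, ∀ j, j ≠ k → v j = w j) with hLC
  set LA := L.filter
    (fun w => ∀ v : (_ : Fin d) → Fin n, (∀ j, j ≠ k → v j = w j) → v ∈ A) with hLA
  set LB := L.filter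
    (fun w => ∀ v : (_ : Fin d) → Fin n, (∀ j, j ≠ k → v j = w j) → v ∈ B) with hLB
  have hcov : ∀ v, v ∈ A ∨ v ∈ B ∨ v ∈ C := by
    intro v
    have := Finset.mem_univ v
    rw [← hcover] at this
    simpa [Finset.mem_union, or_assoc] using this
  -- every line lies in one of the three classes
  have hsub : L ⊆ LA ∪ LB ∪ LC := by
    intro w hw
    have hw0 : (w k : ℕ) = 0 := (Finset.mem_filter.mp hw).2
    by_cases hC : ∃ v ∈ C, ∀ j, j ≠ k → v j = w j
    · exact Finset.mem_union_right _ (Finset.mem_filter.mpr ⟨hw, hC⟩)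
    · have hwnC : w ∉ C := fun h => hC ⟨w, h, fun _ _ => rfl⟩
      rcases hcov w with hwa | hwb | hwc
      · exact Finset.mem_union_left _ <| Finset.mem_union_left _ <|
          Finset.mem_filter.mpr ⟨hw, line_side hn k A B C hcov hnoedge w hw0 hC hwa⟩
      · refine Finset.mem_union_left _ <| Finset.mem_union_right _ <|
          Finset.mem_filter.mpr ⟨hw, ?_⟩
        refine line_side hn k B A C (fun v => by rcases hcov v with h|h|h <;> tauto)
          (fun b hb a ha hadj => hnoedge a ha b hb hadj.symm) w hw0 hC hwb
      · exact absurd hwc hwnC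
  -- counting
  have hsubL : ∀ T : Finset ((_ : Fin d) → Fin n),
      T ⊆ L → ∀ w ∈ T, (w k : ℕ) = 0 :=
    fun T hT w hw => (Finset.mem_filter.mp (hT hw)).2
  have hLcount : n * L.card = n ^ d := by
    have := fiber_count hn k L (hsubL L le_rfl)
    rw [← this]
    have : (Finset.univ.filter
        (fun v : (_ : Fin d) → Fin n => Function.update v k (⟨0, hn⟩ : Fin n) ∈ L)) =
        Finset.univ := by
      apply Finset.eq_univ_of_forall
      intro v
      simp only [Finset.mem_filter, Finset.mem_univ, true_and, hL]
      simp
    rw [this, Finset.card_univ]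
    simp [Fintype.card_pi]
  have hAcount : n * LA.card ≤ A.card := by
    rw [← fiber_count hn k LA (hsubL LA (Finset.filter_subset _ _))]
    apply Finset.card_le_card
    intro v hv
    simp only [Finset.mem_filter, Finset.mem_univ, true_and, hLA] at hv
    exact hv.2 v (fun j hj => (Function.update_of_ne hj _ _).symm)
  have hBcount : n * LB.card ≤ B.card := by
    rw [← fiber_count hn k LB (hsubL LB (Finset.filter_subset _ _))]
    apply Finset.card_le_card
    intro v hv
    simp only [Finset.mem_filter, Finset.mem_univ, true_and, hLB] at hv
    exact hv.2 v (fun j hj => (Function.update_of_ne hj _ _).symm)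
  -- real arithmetic
  have hnpos : (0 : ℝ) < n := by exact_mod_cast hn
  have hdpos : (0 : ℝ) < d := by positivity
  have hpow : (n : ℝ) ^ d = n * (n : ℝ) ^ (d - 1) := by
    rw [← pow_succ']
    congr 1
    omega
  have hLcard : (L.card : ℝ) = (n : ℝ) ^ (d - 1) := by
    have : (n : ℝ) * L.card = (n : ℝ) * (n : ℝ) ^ (d - 1) := by
      rw [← hpow]
      exact_mod_cast hLcount
    exact mul_left_cancel₀ (ne_of_gt hnpos) this
  have hLAcard : (LA.card : ℝ) ≤ α * (n : ℝ) ^ (d - 1) := by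
    have h1 : (n : ℝ) * LA.card ≤ A.card := by exact_mod_cast hAcount
    have h2 : (n : ℝ) * LA.card ≤ α * ((n : ℝ) * (n : ℝ) ^ (d - 1)) := by
      rw [← hpow]; linarith
    nlinarith
  have hLBcard : (LB.card : ℝ) ≤ α * (n : ℝ) ^ (d - 1) := by
    have h1 : (n : ℝ) * LB.card ≤ B.card := by exact_mod_cast hBcount
    have h2 : (n : ℝ) * LB.card ≤ α * ((n : ℝ) * (n : ℝ) ^ (d - 1)) := by
      rw [← hpow]; linarith
    nlinarith
  have hsum : (L.card : ℝ) ≤ LA.card + LB.card + LC.card := by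
    have h1 : L.card ≤ (LA ∪ LB ∪ LC).card := Finset.card_le_card hsub
    have h2 : (LA ∪ LB ∪ LC).card ≤ LA.card + LB.card + LC.card :=
      le_trans (Finset.card_union_le _ _)
        (by exact add_le_add_left (Finset.card_union_le _ _) _)
    exact_mod_cast le_trans h1 h2
  have hfew : (LC.card : ℝ) < (1 - α) * (n : ℝ) ^ (d - 1) / d := hfewlines
  rw [hLcard] at hsum
  set N : ℝ := (n : ℝ) ^ (d - 1)
  have hNpos : (0 : ℝ) < N := by positivity
  have hLCd : (LC.card : ℝ) * d < (1 - α) * N := (lt_div_iff₀ hdpos).mp hfew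
  exact ⟨arith_step d N α _ _ _ hdpos hsum hLBcard hLCd,
    arith_step d N α _ _ _ hdpos (by linarith) hLAcard hLCd⟩
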